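/- Let f_1 : D → V_b be a linear map, f̂_1 ∈ End(D) the induced endomorphism, y = z̄ + f̂_1, E ⊆ ℂ the set of eigenvalues of y, and for e ∈ E let pr_e : D → D be the projection onto the generalized e-eigenspace of y (so Σ_{e∈E} pr_e = Id_D and (y − e)∘pr_e is nilpotent). Define the ℂ-linear map Ψ : 𝓛_b → ℂ(z)^m by Ψ(u) = u + Σ_{e∈E} Σ_{k≥1} (z − e)^{−k} · ι(f_1((y − e·Id)^{k−1} pr_e(ū))), where ū is the class of u in D and ι : V_b ↪ ℂ(z)^m is the inclusion (the inner sums are finite since (y − e)∘pr_e is nilpotent). Then the image ψ(y) := Ψ(𝓛_b) is a ℂ[z]-lattice in ℂ(z)^m which contains L_0 and satisfies dim_ℂ ψ(y)/L_0 = N. -/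

import Mathlib

set_option synthInstance.maxHeartbeats 400000
set_option maxHeartbeats 1000000

namespace GrassRat

noncomputable section

variable (m : ℕ) (b : Fin m → ℕ)

/-- `ℂ(z)^m`. -/
abbrev Rm : Type := Fin m → RatFunc ℂ

/-- The coefficient-extraction map `ℂ(z) → ℂ((z)) → ℂ` (Laurent expansion at `0`),
as a `ℂ`-linear map into Laurent series. -/
def coeL : RatFunc ℂ →ₗ[ℂ] LaurentSeries ℂ where
  toFun := fun v => (v : LaurentSeries ℂ)
  map_add' := fun u v => by simp
  map_smul' := fun r v => by
    rw [RatFunc.smul_eq_C_mul, map_mul, ← HahnSeries.C_mul_eq_smul, ← RatFunc.algebraMap_C]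
    have := RatFunc.coe_coe (Polynomial.C r)
    simp only [Polynomial.coe_C, HahnSeries.ofPowerSeries_C] at this
    rw [RingHom.id_apply, this]; rfl

/-- `L_0 = ℂ[z]^m ⊆ ℂ(z)^m`. -/
def L0R : Submodule (Polynomial ℂ) (Rm m) where
  carrier := {v | ∀ i, ∃ p : Polynomial ℂ, v i = algebraMap (Polynomial ℂ) (RatFunc ℂ) p}
  add_mem' := by
    intro u v hu hv i
    obtain ⟨p, hp⟩ := hu i
    obtain ⟨q, hq⟩ := hv i
    exact ⟨p + q, by simp [hp, hq]⟩
  zero_mem' := by intro i; exact ⟨0, by simp⟩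
  smul_mem' := by
    intro r v hv i
    obtain ⟨p, hp⟩ := hv i
    refine ⟨r * p, ?_⟩
    have : (r • v) i = r • (v i) := rfl
    rw [this, hp, Algebra.smul_def, map_mul]

/-- `𝓛_b = ⊕_i ℂ[z]·z^{−b_i} e_i ⊆ ℂ(z)^m`. -/
def LbR : Submodule (Polynomial ℂ) (Rm m) where
  carrier := {v | ∀ i, ∃ p : Polynomial ℂ,
    v i = algebraMap (Polynomial ℂ) (RatFunc ℂ) p / (RatFunc.X ^ (b i))}
  add_mem' := by
    intro u v hu hv i
    obtain ⟨p, hp⟩ := hu i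
    obtain ⟨q, hq⟩ := hv i
    exact ⟨p + q, by rw [map_add, add_div, ← hp, ← hq]; rfl⟩
  zero_mem' := by intro i; exact ⟨0, by simp⟩
  smul_mem' := by
    intro r v hv i
    obtain ⟨p, hp⟩ := hv i
    refine ⟨r * p, ?_⟩
    have : (r • v) i = r • (v i) := rfl
    rw [this, hp, Algebra.smul_def, map_mul, mul_div_assoc]

/-- `V_b ⊆ ℂ(z)^m`: the `ℂ`-span of `z^{−b_1}e_1, …, z^{−b_m}e_m`. -/
def VbR : Submodule ℂ (Rm m) where
  carrier := {v | ∀ i, ∃ c : ℂ, v i = RatFunc.C c / (RatFunc.X ^ (b i))}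
  add_mem' := by
    intro u v hu hv i
    obtain ⟨p, hp⟩ := hu i
    obtain ⟨q, hq⟩ := hv i
    exact ⟨p + q, by rw [map_add, add_div, ← hp, ← hq]; rfl⟩
  zero_mem' := by intro i; exact ⟨0, by simp⟩
  smul_mem' := by
    intro r v hv i
    obtain ⟨c, hc⟩ := hv i
    refine ⟨r * c, ?_⟩
    have h1 : (r • v) i = r • (v i) := rfl
    rw [h1, hc, map_mul, Algebra.smul_def, mul_div_assoc]
    rfl

/-- A concrete model for `D = 𝓛_b/L_0`: coordinates indexed by the basis vectors
`z^{−(k+1)} e_i` (`i : Fin m`, `k : Fin (b i)`). -/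
abbrev Dspace : Type := ((i : Fin m) × Fin (b i)) → ℂ

/-- The map `ℂ(z)^m → D` reading off the Laurent coefficients in the window
`−b_i ≤ d ≤ −1` of each coordinate; on `𝓛_b` it is the quotient map
`𝓛_b → 𝓛_b/L_0 = D` (`u ↦ ū`). -/
def toD : Rm m →ₗ[ℂ] Dspace m b where
  toFun := fun v p => (coeL (v p.1)).coeff (-(p.2 : ℤ) - 1)
  map_add' := by
    intro u v
    funext p
    simp [HahnSeries.coeff_add]
  map_smul' := by
    intro r v
    funext p
    have : (r • v) p.1 = r • (v p.1) := rfl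
    simp [this, HahnSeries.coeff_smul]

/-- The endomorphism `z̄` of `D = 𝓛_b/L_0` induced by multiplication by `z`. -/
def zbar : Module.End ℂ (Dspace m b) where
  toFun := fun u p => if h : (p.2 : ℕ) + 1 < b p.1 then u ⟨p.1, ⟨(p.2 : ℕ) + 1, h⟩⟩ else 0
  map_add' := by
    intro u v
    funext p
    by_cases h : (p.2 : ℕ) + 1 < b p.1 <;> simp [h]
  map_smul' := by
    intro r v
    funext p
    by_cases h : (p.2 : ℕ) + 1 < b p.1 <;> simp [h]

/-- `f̂_1 : D → D`, induced by a linear map `f_1 : D → V_b ⊆ ℂ(z)^m` (composition with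
the identification of `V_b` with a subspace of `D`, implemented by `toD`). -/
def fhat (f1 : Dspace m b →ₗ[ℂ] Rm m) : Module.End ℂ (Dspace m b) :=
  (toD m b) ∘ₗ f1

-- AUX

open Polynomial

lemma single_pow_inv (n : ℕ) :
    ((HahnSeries.single (n : ℤ) (1:ℂ))⁻¹ : LaurentSeries ℂ) = HahnSeries.single (-(n:ℤ)) 1 := by
  rw [HahnSeries.inv_single, inv_one]

lemma coeff_div_Xpow (p : ℂ[X]) (n : ℕ) (d : ℤ) :
    ((algebraMap ℂ[X] (RatFunc ℂ) p / RatFunc.X ^ n : RatFunc ℂ) : LaurentSeries ℂ).coeff d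
      = if 0 ≤ d + n then p.coeff (d + n).toNat else 0 := by
  have hc : ((algebraMap ℂ[X] (RatFunc ℂ) p : RatFunc ℂ) : LaurentSeries ℂ)
      = ((p : PowerSeries ℂ) : LaurentSeries ℂ) := (RatFunc.coe_coe p).symm
  rw [map_div₀, map_pow, RatFunc.coe_X, hc,
    ← RatFunc.single_one_eq_pow, div_eq_mul_inv, single_pow_inv]
  have h : d = (d + n) + (-(n:ℤ)) := by ring
  rw [h, HahnSeries.coeff_mul_single_add, mul_one, PowerSeries.coeff_coe]
  simp only [add_neg_cancel_right]
  split_ifs with h1 h3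
  · omega
  · rfl
  · rw [Polynomial.coeff_coe]
    congr 1
    omega
  · omega

lemma toD_coord (u : Rm m) (i : Fin m) (p : ℂ[X])
    (h : u i = algebraMap ℂ[X] (RatFunc ℂ) p / RatFunc.X ^ (b i)) (k : Fin (b i)) :
    toD m b u ⟨i, k⟩ = p.coeff (b i - 1 - (k : ℕ)) := by
  have hk : (k : ℕ) < b i := k.2
  show ((u i : RatFunc ℂ) : LaurentSeries ℂ).coeff (-((k : ℕ) : ℤ) - 1) = _
  rw [h, coeff_div_Xpow, if_pos (by omega)]
  congr 1
  omega

lemma toD_L0_coord (u : Rm m) (i : Fin m) (q : ℂ[X])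
    (h : u i = algebraMap ℂ[X] (RatFunc ℂ) q) (k : Fin (b i)) :
    toD m b u ⟨i, k⟩ = 0 := by
  have h0 : u i = algebraMap ℂ[X] (RatFunc ℂ) q / RatFunc.X ^ (0 : ℕ) := by
    rw [h, pow_zero, div_one]
  show ((u i : RatFunc ℂ) : LaurentSeries ℂ).coeff (-((k : ℕ) : ℤ) - 1) = 0
  rw [h0, coeff_div_Xpow, if_neg (by omega)]

section
open Polynomial
variable (m : ℕ) (b : Fin m → ℕ)

lemma polyC_smul (c : ℂ) (v : Rm m) : (Polynomial.C c : Polynomial ℂ) • v = c • v := by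
  funext i
  show (Polynomial.C c : Polynomial ℂ) • v i = c • v i
  rw [Algebra.smul_def, RatFunc.algebraMap_C, ← RatFunc.smul_eq_C_mul]

lemma polyX_smul (v : Rm m) : (Polynomial.X : Polynomial ℂ) • v = (RatFunc.X : RatFunc ℂ) • v := by
  funext i
  show (Polynomial.X : Polynomial ℂ) • v i = (RatFunc.X : RatFunc ℂ) • v i
  rw [Algebra.smul_def, RatFunc.algebraMap_X, smul_eq_mul]

def eps (p : (i : Fin m) × Fin (b i)) : Rm m :=
  Pi.single p.1
    (algebraMap ℂ[X] (RatFunc ℂ) (Polynomial.X ^ (b p.1 - 1 - (p.2 : ℕ))) / RatFunc.X ^ (b p.1))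

lemma eps_coord_ne (p : (i : Fin m) × Fin (b i)) {i : Fin m} (h : i ≠ p.1) :
    eps m b p i = 0 := Pi.single_eq_of_ne h _

lemma eps_coord_self (p : (i : Fin m) × Fin (b i)) :
    eps m b p p.1 = algebraMap ℂ[X] (RatFunc ℂ)
      (Polynomial.X ^ (b p.1 - 1 - (p.2 : ℕ))) / RatFunc.X ^ (b p.1) :=
  Pi.single_eq_same _ _

lemma eps_mem_LbR_aux (p : (i : Fin m) × Fin (b i)) (i : Fin m) :
    ∃ q : ℂ[X], eps m b p i = algebraMap ℂ[X] (RatFunc ℂ) q / RatFunc.X ^ (b i) := by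
  by_cases h : i = p.1
  · exact ⟨Polynomial.X ^ (b p.1 - 1 - (p.2 : ℕ)), by rw [h]; exact eps_coord_self m b p⟩
  · exact ⟨0, by rw [eps_coord_ne m b p h, map_zero, zero_div]⟩

lemma toD_eps (p : (i : Fin m) × Fin (b i)) :
    toD m b (eps m b p) = Pi.single p (1 : ℂ) := by
  funext q
  obtain ⟨pi, pk⟩ := p
  obtain ⟨qi, qk⟩ := q
  by_cases h : qi = pi
  · subst h
    rw [toD_coord m b _ qi (Polynomial.X ^ (b qi - 1 - (pk : ℕ)))
      (eps_coord_self m b ⟨qi, pk⟩) qk, Polynomial.coeff_X_pow]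
    by_cases hkk : qk = pk
    · subst hkk
      simp
    · have h1 : (qk : ℕ) < b qi := qk.2
      have h2 : (pk : ℕ) < b qi := pk.2
      have h3 : (qk : ℕ) ≠ (pk : ℕ) := fun hc => hkk (Fin.ext hc)
      rw [if_neg (by omega), Pi.single_eq_of_ne (by simp [hkk]) _]
  · rw [toD_coord m b _ qi 0
        (by rw [eps_coord_ne m b _ (by simp [h]), map_zero, zero_div]) qk,
      Polynomial.coeff_zero, Pi.single_eq_of_ne (by simp [h]) _]

def iota : Dspace m b →ₗ[ℂ] Rm m where
  toFun x := ∑ p : (i : Fin m) × Fin (b i), x p • eps m b p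
  map_add' u v := by simp [add_smul, Finset.sum_add_distrib]
  map_smul' c u := by simp [smul_smul, Finset.smul_sum]

lemma toD_iota (x : Dspace m b) : toD m b (iota m b x) = x := by
  show toD m b (∑ p, x p • eps m b p) = x
  rw [map_sum]
  have h1 : ∀ p : (i : Fin m) × Fin (b i),
      toD m b (x p • eps m b p) = Pi.single p (x p) := by
    intro p
    rw [map_smul, toD_eps]
    ext q
    by_cases h : q = p
    · subst h; simp
    · simp [Pi.single_eq_of_ne h]
  simp_rw [h1]
  exact Finset.univ_sum_single x

def rpoly (x : Dspace m b) (i : Fin m) : ℂ[X] :=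
  ∑ k : Fin (b i), Polynomial.C (x ⟨i, k⟩) * Polynomial.X ^ (b i - 1 - (k : ℕ))

lemma iota_coord (x : Dspace m b) (i : Fin m) :
    iota m b x i = algebraMap ℂ[X] (RatFunc ℂ) (rpoly m b x i) / RatFunc.X ^ (b i) := by
  show (∑ p : (i : Fin m) × Fin (b i), x p • eps m b p) i = _
  rw [Finset.sum_apply, ← Finset.univ_sigma_univ, Finset.sum_sigma]
  rw [Finset.sum_eq_single i (fun j _ hj => Finset.sum_eq_zero
    (fun k _ => by rw [Pi.smul_apply, eps_coord_ne m b _ (Ne.symm hj), smul_zero]))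
    (fun h => absurd (Finset.mem_univ i) h)]
  rw [rpoly, map_sum, Finset.sum_div]
  refine Finset.sum_congr rfl (fun k _ => ?_)
  rw [Pi.smul_apply, eps_coord_self m b ⟨i, k⟩, map_mul, RatFunc.algebraMap_C,
    ← RatFunc.smul_eq_C_mul, div_eq_mul_inv, div_eq_mul_inv, smul_mul_assoc]

lemma iota_mem_LbR (x : Dspace m b) : ∀ i, ∃ q : ℂ[X],
    iota m b x i = algebraMap ℂ[X] (RatFunc ℂ) q / RatFunc.X ^ (b i) :=
  fun i => ⟨rpoly m b x i, iota_coord m b x i⟩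

lemma coeff_divX_iter (n : ℕ) (p : ℂ[X]) (t : ℕ) :
    (Polynomial.divX^[n] p).coeff t = p.coeff (t + n) := by
  induction n generalizing p with
  | zero => simp
  | succ n ih =>
    rw [Function.iterate_succ_apply, ih, Polynomial.coeff_divX]
    congr 1

lemma rpoly_toD (u : Rm m) (i : Fin m) (p : ℂ[X])
    (h : u i = algebraMap ℂ[X] (RatFunc ℂ) p / RatFunc.X ^ (b i)) :
    rpoly m b (toD m b u) i = p - Polynomial.divX^[b i] p * Polynomial.X ^ (b i) := by
  ext n
  rw [rpoly, Polynomial.finset_sum_coeff, Polynomial.coeff_sub, Polynomial.coeff_mul_X_pow',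
    coeff_divX_iter]
  simp_rw [Polynomial.coeff_C_mul, Polynomial.coeff_X_pow]
  by_cases hn : n < b i
  · rw [if_neg (by omega), sub_zero,
      Finset.sum_eq_single (⟨b i - 1 - n, by omega⟩ : Fin (b i))]
    · rw [toD_coord m b u i p h]
      have hv : ((⟨b i - 1 - n, by omega⟩ : Fin (b i)) : ℕ) = b i - 1 - n := rfl
      rw [hv, if_pos (by omega), mul_one]
      congr 1
      omega
    · intro k _ hk
      have hkb : (k : ℕ) < b i := k.2
      rw [if_neg, mul_zero]
      intro hc
      exact hk (Fin.ext (by simp only [Fin.val_mk]; omega))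
    · intro h'; exact absurd (Finset.mem_univ _) h'
  · rw [if_pos (by omega)]
    have he : n - b i + b i = n := by omega
    rw [he, sub_self]
    refine Finset.sum_eq_zero (fun k _ => ?_)
    have : (k : ℕ) < b i := k.2
    rw [if_neg (by omega), mul_zero]

lemma sub_iota_mem_L0 (u : Rm m)
    (hu : ∀ i, ∃ q : ℂ[X], u i = algebraMap ℂ[X] (RatFunc ℂ) q / RatFunc.X ^ (b i)) :
    ∀ i, ∃ q : ℂ[X], (u - iota m b (toD m b u)) i = algebraMap ℂ[X] (RatFunc ℂ) q := by
  intro i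
  obtain ⟨p, hp⟩ := hu i
  refine ⟨Polynomial.divX^[b i] p, ?_⟩
  have hX : (RatFunc.X : RatFunc ℂ) ^ (b i) ≠ 0 := pow_ne_zero _ RatFunc.X_ne_zero
  have : (u - iota m b (toD m b u)) i = u i - iota m b (toD m b u) i := rfl
  rw [this, hp, iota_coord, rpoly_toD m b u i p hp, map_sub, sub_div, sub_sub_cancel,
    map_mul, map_pow, RatFunc.algebraMap_X, mul_div_cancel_right₀ _ hX]
end

-- strictly proper rational functions
lemma ne_zero_of_intDegree_neg {f : RatFunc ℂ} (h : f.intDegree < 0) : f ≠ 0 := by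
  intro h0; rw [h0, RatFunc.intDegree_zero] at h; exact absurd h (lt_irrefl 0)

def SP : Submodule ℂ (RatFunc ℂ) where
  carrier := {f | f = 0 ∨ f.intDegree < 0}
  zero_mem' := Or.inl rfl
  add_mem' := by
    rintro f g (rfl | hf) (rfl | hg)
    · simp
    · simpa using Or.inr hg
    · simpa using Or.inr hf
    · by_cases h : f + g = 0
      · exact Or.inl h
      · exact Or.inr (lt_of_le_of_lt
          (RatFunc.intDegree_add_le (ne_zero_of_intDegree_neg hg) h)
          (max_lt hf hg))
  smul_mem' := by
    rintro c f (rfl | hf)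
    · simp
    · by_cases hc : c = 0
      · simp [hc]
      · right
        have hC : RatFunc.C c ≠ 0 := by
          rw [← RatFunc.algebraMap_C]
          exact RatFunc.algebraMap_ne_zero (Polynomial.C_ne_zero.mpr hc)
        rw [RatFunc.smul_eq_C_mul,
          RatFunc.intDegree_mul hC (ne_zero_of_intDegree_neg hf), RatFunc.intDegree_C]
        omega

lemma SP_poly {p : Polynomial ℂ} (h : algebraMap (Polynomial ℂ) (RatFunc ℂ) p ∈ SP) :
    p = 0 := by
  rcases h with h | h
  · by_contra hp
    exact RatFunc.algebraMap_ne_zero hp h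
  · rw [RatFunc.intDegree_polynomial] at h
    exact absurd h (by omega)

lemma intDegree_inv (f : RatFunc ℂ) : f⁻¹.intDegree = -f.intDegree := by
  by_cases hf : f = 0
  · simp [hf]
  · have h1 : f * f⁻¹ = 1 := mul_inv_cancel₀ hf
    have := RatFunc.intDegree_mul hf (inv_ne_zero hf)
    rw [h1, RatFunc.intDegree_one] at this
    omega

lemma intDegree_div (f g : RatFunc ℂ) (hf : f ≠ 0) (hg : g ≠ 0) :
    (f / g).intDegree = f.intDegree - g.intDegree := by
  have h1 : f / g ≠ 0 := div_ne_zero hf hg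
  have := RatFunc.intDegree_mul h1 hg
  rw [div_mul_cancel₀ _ hg] at this
  omega

lemma XsubC_eq (e : ℂ) : (RatFunc.X : RatFunc ℂ) - RatFunc.C e
    = algebraMap (Polynomial ℂ) (RatFunc ℂ) (Polynomial.X - Polynomial.C e) := by
  rw [map_sub, RatFunc.algebraMap_X, RatFunc.algebraMap_C]

lemma XsubC_pow_ne (e : ℂ) (k : ℕ) :
    ((RatFunc.X : RatFunc ℂ) - RatFunc.C e) ^ k ≠ 0 := by
  apply pow_ne_zero
  rw [XsubC_eq]
  exact RatFunc.algebraMap_ne_zero (Polynomial.X_sub_C_ne_zero e)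

lemma intDegree_ginv (e : ℂ) (k : ℕ) :
    ((((RatFunc.X : RatFunc ℂ) - RatFunc.C e) ^ k)⁻¹).intDegree = -(k : ℤ) := by
  rw [intDegree_inv, XsubC_eq, ← map_pow, RatFunc.intDegree_polynomial,
    Polynomial.natDegree_pow, Polynomial.natDegree_X_sub_C, mul_one]

lemma SP_mul_mem {f w : RatFunc ℂ} (hf : f ≠ 0) (hfd : f.intDegree ≤ 0) (hw : w ∈ SP) :
    f * w ∈ SP := by
  rcases hw with rfl | hw
  · exact Or.inl (mul_zero f)
  · exact Or.inr (by rw [RatFunc.intDegree_mul hf (ne_zero_of_intDegree_neg hw)]; omega)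

lemma SP_Cdiv_mem (c : ℂ) (n : ℕ) (hn : 1 ≤ n) :
    (RatFunc.C c : RatFunc ℂ) / RatFunc.X ^ n ∈ SP := by
  by_cases hc : c = 0
  · subst hc; rw [map_zero, zero_div]; exact Or.inl rfl
  · right
    have hC : RatFunc.C c ≠ 0 := by
      rw [← RatFunc.algebraMap_C]
      exact RatFunc.algebraMap_ne_zero (Polynomial.C_ne_zero.mpr hc)
    have hX : (RatFunc.X : RatFunc ℂ) ^ n ≠ 0 := pow_ne_zero _ RatFunc.X_ne_zero
    rw [intDegree_div _ _ hC hX, RatFunc.intDegree_C, ← RatFunc.algebraMap_X, ← map_pow,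
      RatFunc.intDegree_polynomial, Polynomial.natDegree_pow, Polynomial.natDegree_X]
    omega

lemma SP_monodiv_mem (j n : ℕ) (hj : j < n) :
    algebraMap (Polynomial ℂ) (RatFunc ℂ) (Polynomial.X ^ j) / RatFunc.X ^ n ∈ SP := by
  right
  have hp : algebraMap (Polynomial ℂ) (RatFunc ℂ) (Polynomial.X ^ j) ≠ 0 :=
    RatFunc.algebraMap_ne_zero (pow_ne_zero _ Polynomial.X_ne_zero)
  have hX : (RatFunc.X : RatFunc ℂ) ^ n ≠ 0 := pow_ne_zero _ RatFunc.X_ne_zero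
  rw [intDegree_div _ _ hp hX, RatFunc.intDegree_polynomial, ← RatFunc.algebraMap_X, ← map_pow,
    RatFunc.intDegree_polynomial, Polynomial.natDegree_pow, Polynomial.natDegree_pow,
    Polynomial.natDegree_X]
  omega

lemma finrank_Dspace : Module.finrank ℂ (Dspace m b) = ∑ i, b i := by
  rw [Module.finrank_pi ℂ, Fintype.card_sigma]
  simp

lemma indep_sum_eq_zero {M : Type*} [AddCommGroup M] [Module ℂ M]
    (S : ℂ → Submodule ℂ M) (hI : iSupIndep S) (s : Finset ℂ)
    (x : ℂ → M) (hx : ∀ e ∈ s, x e ∈ S e) (h0 : ∑ e ∈ s, x e = 0) :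
    ∀ e ∈ s, x e = 0 := by
  intro e he
  have h1 : x e = -∑ e' ∈ s.erase e, x e' := by
    rw [← Finset.add_sum_erase s x he] at h0
    exact eq_neg_of_add_eq_zero_left h0
  have h2 : x e ∈ ⨆ (j) (_ : j ≠ e), S j := by
    rw [h1]
    refine neg_mem (Submodule.sum_mem _ (fun e' he' => ?_))
    exact Submodule.mem_iSup_of_mem e'
      (Submodule.mem_iSup_of_mem (Finset.ne_of_mem_erase he') (hx e' (Finset.mem_of_mem_erase he')))
  exact Submodule.disjoint_def.mp (hI e) _ (hx e he) h2

section Eigen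

variable {m b} {N : ℕ} {y : Module.End ℂ (Dspace m b)} {E : Finset ℂ}
  {pr : ℂ → Module.End ℂ (Dspace m b)}

lemma pr_comm (hsum : ∑ e ∈ E, pr e = 1)
    (hrange : ∀ e ∈ E, LinearMap.range (pr e) ≤ Module.End.maxGenEigenspace y e)
    (e : ℂ) (he : e ∈ E) (v : Dspace m b) :
    pr e (y v) = y (pr e v) := by
  set d : ℂ → Dspace m b := fun e' => pr e' (y v) - y (pr e' v) with hd_def
  have hd : ∀ e' ∈ E, d e' ∈ y.maxGenEigenspace e' := by
    intro e' he'
    refine sub_mem (hrange e' he' ⟨y v, rfl⟩) ?_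
    exact Module.End.mapsTo_maxGenEigenspace_of_comm (Commute.refl y) e'
      (hrange e' he' ⟨v, rfl⟩)
  have hsum0 : ∑ e' ∈ E, d e' = 0 := by
    simp only [hd_def, Finset.sum_sub_distrib, ← map_sum]
    have h1 : ∑ e' ∈ E, pr e' (y v) = y v := by
      rw [← LinearMap.sum_apply, hsum, Module.End.one_apply]
    have h2 : (∑ e' ∈ E, pr e' v) = v := by
      rw [← LinearMap.sum_apply, hsum, Module.End.one_apply]
    rw [h1, h2, sub_self]
  have := indep_sum_eq_zero _ (Module.End.independent_maxGenEigenspace y) E d hd hsum0 e he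
  exact sub_eq_zero.mp this

lemma pr_nilp (hN : N = ∑ i, b i)
    (hrange : ∀ e ∈ E, LinearMap.range (pr e) ≤ Module.End.maxGenEigenspace y e)
    (e : ℂ) (he : e ∈ E) (v : Dspace m b) :
    ((y - e • 1) ^ N) (pr e v) = 0 := by
  have hm : pr e v ∈ y.maxGenEigenspace e := hrange e he ⟨v, rfl⟩
  rw [Module.End.maxGenEigenspace_eq_genEigenspace_finrank,
    Module.End.mem_genEigenspace_nat, LinearMap.mem_ker] at hm
  rw [finrank_Dspace, ← hN] at hm
  exact hm

end Eigen



lemma tele_sum {M : Type*} [AddCommGroup M] (h : ℕ → M) (N : ℕ) :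
    ∑ k ∈ Finset.Icc 1 N, h (k - 1) = (h 0 - h N) + ∑ k ∈ Finset.Icc 1 N, h k := by
  induction N with
  | zero => simp
  | succ n ih =>
    rw [Finset.sum_Icc_succ_top (by omega : 1 ≤ n + 1), ih,
      Finset.sum_Icc_succ_top (by omega : 1 ≤ n + 1)]
    have hnn : n + 1 - 1 = n := by omega
    rw [hnn]
    abel

lemma toD_X_smul (u : Rm m)
    (hu : ∀ i, ∃ p : ℂ[X], u i = algebraMap ℂ[X] (RatFunc ℂ) p / RatFunc.X ^ (b i)) :
    toD m b ((Polynomial.X : Polynomial ℂ) • u) = zbar m b (toD m b u) := by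
  funext q
  obtain ⟨i, k⟩ := q
  obtain ⟨p, hp⟩ := hu i
  have hXu : ((Polynomial.X : Polynomial ℂ) • u) i
      = algebraMap ℂ[X] (RatFunc ℂ) (Polynomial.X * p) / RatFunc.X ^ (b i) := by
    have h0 : ((Polynomial.X : Polynomial ℂ) • u) i = (Polynomial.X : Polynomial ℂ) • u i := rfl
    rw [h0, Algebra.smul_def, map_mul, hp, mul_div_assoc]
  rw [toD_coord m b _ i (Polynomial.X * p) hXu k]
  show _ = (if h : (k : ℕ) + 1 < b i then (toD m b u) ⟨i, ⟨(k : ℕ) + 1, h⟩⟩ else 0)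
  by_cases h : (k : ℕ) + 1 < b i
  · rw [dif_pos h, toD_coord m b u i p hp]
    have h1 : b i - 1 - (k : ℕ) = (b i - 1 - ((k : ℕ) + 1)) + 1 := by
      have := k.2; omega
    rw [h1, Polynomial.coeff_X_mul]
  · rw [dif_neg h]
    have h1 : b i - 1 - (k : ℕ) = 0 := by have := k.2; omega
    rw [h1, Polynomial.mul_coeff_zero, Polynomial.coeff_X_zero, zero_mul]

lemma hXg (e : ℂ) (k : ℕ) (hk : 1 ≤ k) :
    (RatFunc.X : RatFunc ℂ) * (((RatFunc.X - RatFunc.C e) ^ k)⁻¹)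
      = ((RatFunc.X - RatFunc.C e) ^ (k - 1))⁻¹
        + RatFunc.C e * ((RatFunc.X - RatFunc.C e) ^ k)⁻¹ := by
  have hs : (RatFunc.X : RatFunc ℂ) - RatFunc.C e ≠ 0 := by
    rw [XsubC_eq]
    exact RatFunc.algebraMap_ne_zero (Polynomial.X_sub_C_ne_zero e)
  have hpow : (RatFunc.X - RatFunc.C e) ^ k
      = (RatFunc.X - RatFunc.C e) ^ (k - 1) * (RatFunc.X - RatFunc.C e) := by
    rw [← pow_succ]
    congr 1
    omega
  have h2 : (RatFunc.X - RatFunc.C e) * ((RatFunc.X - RatFunc.C e) ^ k)⁻¹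
      = ((RatFunc.X - RatFunc.C e) ^ (k - 1))⁻¹ := by
    rw [hpow, mul_inv_rev, ← mul_assoc, mul_inv_cancel₀ hs, one_mul]
  linear_combination h2

section Psi

variable (N : ℕ) (f1 : Dspace m b →ₗ[ℂ] Rm m) (y : Module.End ℂ (Dspace m b))
  (E : Finset ℂ) (pr : ℂ → Module.End ℂ (Dspace m b))

def Psi : Rm m →ₗ[ℂ] Rm m where
  toFun := fun u => u + ∑ e ∈ E, ∑ k ∈ Finset.Icc 1 N,
      ((RatFunc.X - RatFunc.C e) ^ k)⁻¹ •
        (f1 ((((y - e • 1) ^ (k - 1)) : Module.End ℂ (Dspace m b))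
          ((pr e) (toD m b u))))
  map_add' u v := by
    simp only [map_add, LinearMap.add_apply, smul_add, Finset.sum_add_distrib]
    abel
  map_smul' c u := by
    simp only [map_smul, RingHom.id_apply, smul_add, Finset.smul_sum, smul_comm c]

@[simp] lemma Psi_apply (u : Rm m) : Psi m b N f1 y E pr u
    = u + ∑ e ∈ E, ∑ k ∈ Finset.Icc 1 N,
      ((RatFunc.X - RatFunc.C e) ^ k)⁻¹ •
        (f1 ((((y - e • 1) ^ (k - 1)) : Module.End ℂ (Dspace m b))
          ((pr e) (toD m b u)))) := rfl

lemma psi_X_smul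
    (hN : N = ∑ i, b i)
    (hsum : ∑ e ∈ E, pr e = 1)
    (hrange : ∀ e ∈ E, LinearMap.range (pr e) ≤ Module.End.maxGenEigenspace y e)
    (hy : y = zbar m b + fhat m b f1)
    (u : Rm m)
    (hu : ∀ i, ∃ p : ℂ[X], u i = algebraMap ℂ[X] (RatFunc ℂ) p / RatFunc.X ^ (b i)) :
    (RatFunc.X : RatFunc ℂ) • Psi m b N f1 y E pr u
      = Psi m b N f1 y E pr ((Polynomial.X : Polynomial ℂ) • u + f1 (toD m b u)) := by
  set x : Dspace m b := toD m b u with hx_def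
  set g : ℂ → ℕ → RatFunc ℂ := fun e k => ((RatFunc.X - RatFunc.C e) ^ k)⁻¹ with hg_def
  set T : ℂ → ℕ → Rm m := fun e j =>
    f1 ((((y - e • 1) ^ j) : Module.End ℂ (Dspace m b)) ((pr e) x)) with hT_def
  have hw : toD m b ((Polynomial.X : Polynomial ℂ) • u + f1 (toD m b u)) = y x := by
    rw [map_add, toD_X_smul m b u hu, hy, LinearMap.add_apply]
    rfl
  have hL : (RatFunc.X : RatFunc ℂ) • Psi m b N f1 y E pr u
      = (RatFunc.X : RatFunc ℂ) • u + ∑ e ∈ E, ∑ k ∈ Finset.Icc 1 N,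
          (g e (k - 1) • T e (k - 1) + (RatFunc.C e * g e k) • T e (k - 1)) := by
    rw [Psi_apply, smul_add, Finset.smul_sum]
    congr 1
    refine Finset.sum_congr rfl (fun e he => ?_)
    rw [Finset.smul_sum]
    refine Finset.sum_congr rfl (fun k hk => ?_)
    have hk1 : 1 ≤ k := (Finset.mem_Icc.mp hk).1
    rw [smul_smul, hXg e k hk1, add_smul]
  have hR : Psi m b N f1 y E pr ((Polynomial.X : Polynomial ℂ) • u + f1 (toD m b u))
      = ((Polynomial.X : Polynomial ℂ) • u + f1 x) + ∑ e ∈ E, ∑ k ∈ Finset.Icc 1 N,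
          (g e k • T e k + (RatFunc.C e * g e k) • T e (k - 1)) := by
    rw [Psi_apply, hw]
    congr 1
    refine Finset.sum_congr rfl (fun e he => ?_)
    refine Finset.sum_congr rfl (fun k hk => ?_)
    have hk1 : 1 ≤ k := (Finset.mem_Icc.mp hk).1
    have hyx : (pr e) (y x) = (y - e • 1) ((pr e) x) + e • ((pr e) x) := by
      rw [pr_comm hsum hrange e he x, LinearMap.sub_apply]
      simp
    have hpow : (((y - e • 1) ^ (k - 1)) : Module.End ℂ (Dspace m b)) ((y - e • 1) ((pr e) x))
        = (((y - e • 1) ^ k) : Module.End ℂ (Dspace m b)) ((pr e) x) := by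
      have h3 : ((y - e • 1) ^ (k - 1)) * (y - e • 1) = (y - e • 1) ^ k := by
        rw [← pow_succ]
        congr 1
        omega
      rw [← Module.End.mul_apply, h3]
    rw [hyx, map_add, map_smul, hpow, map_add, map_smul, smul_add]
    congr 1
    rw [smul_comm (g e k) e (T e (k - 1)), ← smul_assoc, RatFunc.smul_eq_C_mul]
  rw [hL, hR]
  simp only [Finset.sum_add_distrib]
  have htel : (∑ e ∈ E, ∑ k ∈ Finset.Icc 1 N, g e (k - 1) • T e (k - 1))
      = f1 x + ∑ e ∈ E, ∑ k ∈ Finset.Icc 1 N, g e k • T e k := by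
    have hper : ∀ e ∈ E, ∑ k ∈ Finset.Icc 1 N, g e (k - 1) • T e (k - 1)
        = f1 ((pr e) x) + ∑ k ∈ Finset.Icc 1 N, g e k • T e k := by
      intro e he
      have hT0 : g e 0 • T e 0 = f1 ((pr e) x) := by
        rw [hg_def, hT_def]
        simp
      have hTN : T e N = 0 := by
        rw [hT_def]
        show f1 _ = 0
        rw [pr_nilp hN hrange e he x, map_zero]
      have h3 := tele_sum (fun j => g e j • T e j) N
      simp only [hT0] at h3
      rw [hTN, smul_zero, sub_zero] at h3
      exact h3
    rw [Finset.sum_congr rfl hper, Finset.sum_add_distrib]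
    congr 1
    rw [← map_sum]
    congr 1
    rw [← LinearMap.sum_apply, hsum, Module.End.one_apply]
  rw [htel, polyX_smul]
  abel


end Psi

lemma single_comb (c : Fin m → RatFunc ℂ) :
    ∑ i, c i • (Pi.single i (1 : RatFunc ℂ) : Rm m) = c := by
  funext j
  rw [Finset.sum_apply, Finset.sum_eq_single j
    (fun i _ hij => by rw [Pi.smul_apply, Pi.single_eq_of_ne (Ne.symm hij), smul_zero])
    (fun h => absurd (Finset.mem_univ j) h),
    Pi.smul_apply, Pi.single_eq_same, smul_eq_mul, mul_one]

lemma single_one_mem_L0 (i : Fin m) :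
    ∀ j, ∃ p : ℂ[X], (Pi.single i (1 : RatFunc ℂ) : Rm m) j
      = algebraMap ℂ[X] (RatFunc ℂ) p := by
  intro j
  by_cases h : j = i
  · subst h
    exact ⟨1, by rw [Pi.single_eq_same, map_one]⟩
  · exact ⟨0, by rw [Pi.single_eq_of_ne h, map_zero]⟩

lemma SP_mul_C_mem (e : ℂ) (k : ℕ) (hk : 1 ≤ k) (c : ℂ) :
    (((RatFunc.X : RatFunc ℂ) - RatFunc.C e) ^ k)⁻¹ * RatFunc.C c ∈ SP := by
  by_cases hc : c = 0
  · subst hc; rw [map_zero, mul_zero]; exact Or.inl rfl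
  · right
    have hC : RatFunc.C c ≠ 0 := by
      rw [← RatFunc.algebraMap_C]
      exact RatFunc.algebraMap_ne_zero (Polynomial.C_ne_zero.mpr hc)
    rw [RatFunc.intDegree_mul (inv_ne_zero (XsubC_pow_ne e k)) hC, intDegree_ginv,
      RatFunc.intDegree_C]
    omega

lemma eps_coord_SP (hb : ∀ i, 1 ≤ b i) (p : (i : Fin m) × Fin (b i)) (i : Fin m) :
    eps m b p i ∈ SP := by
  by_cases h : i = p.1
  · have hb1 := hb p.1
    rw [h, eps_coord_self]
    exact SP_monodiv_mem _ _ (by omega)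
  · rw [eps_coord_ne m b p h]
    exact SP.zero_mem

lemma iota_coord_SP (hb : ∀ i, 1 ≤ b i) (x : Dspace m b) (i : Fin m) :
    iota m b x i ∈ SP := by
  show (∑ p : (i : Fin m) × Fin (b i), x p • eps m b p) i ∈ SP
  rw [Finset.sum_apply]
  refine Submodule.sum_mem _ (fun p _ => ?_)
  rw [Pi.smul_apply]
  exact SP.smul_mem _ (eps_coord_SP m b hb p i)

section PsiSP

variable (N : ℕ) (f1 : Dspace m b →ₗ[ℂ] Rm m) (y : Module.End ℂ (Dspace m b))
  (E : Finset ℂ) (pr : ℂ → Module.End ℂ (Dspace m b))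

lemma psi_iota_L0_eq_zero (hb : ∀ i, 1 ≤ b i)
    (hf1 : ∀ w, ∀ i, ∃ c : ℂ, f1 w i = RatFunc.C c / RatFunc.X ^ (b i))
    (x : Dspace m b)
    (hmem : ∀ i, ∃ q : ℂ[X],
      Psi m b N f1 y E pr (iota m b x) i = algebraMap ℂ[X] (RatFunc ℂ) q) :
    Psi m b N f1 y E pr (iota m b x) = 0 := by
  funext i
  obtain ⟨q, hq⟩ := hmem i
  have hSP : Psi m b N f1 y E pr (iota m b x) i ∈ SP := by
    rw [Psi_apply, Pi.add_apply]
    refine SP.add_mem (iota_coord_SP m b hb x i) ?_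
    rw [Finset.sum_apply]
    refine Submodule.sum_mem _ (fun e he => ?_)
    rw [Finset.sum_apply]
    refine Submodule.sum_mem _ (fun k hk => ?_)
    rw [Pi.smul_apply]
    obtain ⟨c, hc⟩ := hf1 _ i
    rw [hc, smul_eq_mul]
    exact SP_mul_mem (inv_ne_zero (XsubC_pow_ne e k))
      (by rw [intDegree_ginv]; omega) (SP_Cdiv_mem c (b i) (hb i))
  rw [hq] at hSP ⊢
  rw [SP_poly hSP, map_zero]
  rfl

lemma psi_iota_zero_imp (hb : ∀ i, 1 ≤ b i)
    (hf1 : ∀ w, ∀ i, ∃ c : ℂ, f1 w i = RatFunc.C c / RatFunc.X ^ (b i))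
    (x : Dspace m b)
    (h0 : Psi m b N f1 y E pr (iota m b x) = 0) : x = 0 := by
  have hiota : iota m b x = 0 := by
    funext i
    have hX : (RatFunc.X : RatFunc ℂ) ^ (b i) ≠ 0 := pow_ne_zero _ RatFunc.X_ne_zero
    have h0i : iota m b x i + (∑ e ∈ E, ∑ k ∈ Finset.Icc 1 N,
        ((RatFunc.X - RatFunc.C e) ^ k)⁻¹ •
          (f1 ((((y - e • 1) ^ (k - 1)) : Module.End ℂ (Dspace m b))
            ((pr e) (toD m b (iota m b x)))))) i = 0 := by
      have h := congrFun h0 i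
      rwa [Psi_apply, Pi.add_apply] at h
    have h2 := eq_neg_of_add_eq_zero_left h0i
    have h1 : algebraMap ℂ[X] (RatFunc ℂ) (rpoly m b x i)
        = iota m b x i * RatFunc.X ^ (b i) := by
      rw [iota_coord, div_mul_cancel₀ _ hX]
    have h3 : algebraMap ℂ[X] (RatFunc ℂ) (rpoly m b x i) ∈ SP := by
      rw [h1, h2]
      simp only [Finset.sum_apply]
      rw [neg_mul, Finset.sum_mul]
      refine Submodule.neg_mem _ (Submodule.sum_mem _ (fun e he => ?_))
      rw [Finset.sum_mul]
      refine Submodule.sum_mem _ (fun k hk => ?_)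
      obtain ⟨c, hc⟩ := hf1 _ i
      rw [Pi.smul_apply, hc, smul_eq_mul, mul_assoc, div_mul_cancel₀ _ hX]
      exact SP_mul_C_mem e k (Finset.mem_Icc.mp hk).1 c
    rw [iota_coord, SP_poly h3, map_zero, zero_div]
    rfl
  calc x = toD m b (iota m b x) := (toD_iota m b x).symm
  _ = toD m b 0 := by rw [hiota]
  _ = 0 := map_zero _

end PsiSP


/-- let `f_1 : D → V_b`, `y = z̄ + f̂_1`, `E` the set of eigenvalues of `y`,
and `pr_e` (`e ∈ E`) the projections onto the generalized eigenspaces of `y`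
(`Σ_{e∈E} pr_e = Id`, `range (pr_e) ⊆` the generalized `e`-eigenspace — which pins the
`pr_e` down and makes each `(y − e)∘pr_e` nilpotent).  Define
`Ψ(u) = u + Σ_{e∈E} Σ_{k≥1} (z − e)^{−k}·ι(f_1((y − e)^{k−1} pr_e(ū)))` on `𝓛_b`
(the class `ū ∈ D` being `toD u`; the inner sum is finite — the summands with
`k > N = dim D` vanish, so it is truncated at `N`).  Then `ψ(y) = Ψ(𝓛_b)` is a
`ℂ[z]`-lattice in `ℂ(z)^m` (a finitely generated `ℂ[z]`-submodule spanning `ℂ(z)^m`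
over `ℂ(z)`) containing `L_0` with `dim_ℂ ψ(y)/L_0 = N` (encoded by an `N`-dimensional
`ℂ`-complement of `L_0` in `ψ(y)`). -/
theorem stmt15 (N : ℕ) (hm : 1 ≤ m) (hb : ∀ i, 1 ≤ b i) (hN : N = ∑ i, b i)
    (f1 : Dspace m b →ₗ[ℂ] Rm m) (hf1 : ∀ w, f1 w ∈ VbR m b)
    (y : Module.End ℂ (Dspace m b)) (hy : y = zbar m b + fhat m b f1)
    (E : Finset ℂ) (hE : ∀ e : ℂ, e ∈ E ↔ y.HasEigenvalue e)
    (pr : ℂ → Module.End ℂ (Dspace m b))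
    (hsum : ∑ e ∈ E, pr e = 1)
    (hrange : ∀ e ∈ E, LinearMap.range (pr e) ≤ Module.End.maxGenEigenspace y e) :
    ∃ M : Submodule (Polynomial ℂ) (Rm m),
      (M : Set (Rm m)) =
        (fun u => u + ∑ e ∈ E, ∑ k ∈ Finset.Icc 1 N,
            ((RatFunc.X - RatFunc.C e) ^ k)⁻¹ •
              (f1 ((((y - e • 1) ^ (k - 1)) : Module.End ℂ (Dspace m b))
                ((pr e) (toD m b u)))))
          '' ((LbR m b : Submodule (Polynomial ℂ) (Rm m)) : Set (Rm m))
      ∧ M.FG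
      ∧ Submodule.span (RatFunc ℂ) (M : Set (Rm m)) = ⊤
      ∧ L0R m ≤ M
      ∧ ∃ W : Submodule ℂ (Rm m), FiniteDimensional ℂ ↥W
          ∧ Module.finrank ℂ ↥W = N
          ∧ W ⊓ (Submodule.restrictScalars ℂ (L0R m)) = ⊥
          ∧ (Submodule.restrictScalars ℂ (L0R m)) ⊔ W = Submodule.restrictScalars ℂ M := by
  classical
  have hf1' : ∀ w, ∀ i, ∃ c : ℂ, f1 w i = RatFunc.C c / RatFunc.X ^ (b i) := fun w => hf1 w
  have hVb_Lb : ∀ w : Rm m, (∀ i, ∃ c : ℂ, w i = RatFunc.C c / RatFunc.X ^ (b i)) →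
      ∀ i, ∃ p : Polynomial ℂ, w i = algebraMap (Polynomial ℂ) (RatFunc ℂ) p / RatFunc.X ^ (b i) := by
    intro w hw i
    obtain ⟨c, hc⟩ := hw i
    exact ⟨Polynomial.C c, by rw [hc, RatFunc.algebraMap_C]⟩
  have hL0_Lb : ∀ w : Rm m, (∀ i, ∃ p : Polynomial ℂ, w i = algebraMap (Polynomial ℂ) (RatFunc ℂ) p) →
      ∀ i, ∃ p : Polynomial ℂ, w i = algebraMap (Polynomial ℂ) (RatFunc ℂ) p / RatFunc.X ^ (b i) := by
    intro w hw i
    obtain ⟨p, hp⟩ := hw i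
    exact ⟨p * Polynomial.X ^ (b i), by
      rw [hp, map_mul, map_pow, RatFunc.algebraMap_X,
        mul_div_cancel_right₀ _ (pow_ne_zero _ RatFunc.X_ne_zero)]⟩
  have hz0 : ∀ w : Rm m, (∀ i, ∃ p : Polynomial ℂ, w i = algebraMap (Polynomial ℂ) (RatFunc ℂ) p) →
      toD m b w = 0 := by
    intro w hw
    funext p
    obtain ⟨q, hq⟩ := hw p.1
    exact toD_L0_coord m b w p.1 q hq p.2
  have hid : ∀ w : Rm m, (∀ i, ∃ p : Polynomial ℂ, w i = algebraMap (Polynomial ℂ) (RatFunc ℂ) p) →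
      Psi m b N f1 y E pr w = w := by
    intro w hw
    rw [Psi_apply, hz0 w hw]
    simp
  set S : Set (Rm m) := ⇑(Psi m b N f1 y E pr) '' ((LbR m b : Set (Rm m))) with hS_def
  have hadd : ∀ v w : Rm m, v ∈ S → w ∈ S → v + w ∈ S := by
    rintro _ _ ⟨u1, h1, rfl⟩ ⟨u2, h2, rfl⟩
    exact ⟨u1 + u2, Submodule.add_mem _ h1 h2, map_add _ _ _⟩
  have h0S : (0 : Rm m) ∈ S := ⟨0, Submodule.zero_mem _, map_zero _⟩
  have hCS : ∀ (c : ℂ) (v : Rm m), v ∈ S → c • v ∈ S := by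
    rintro c _ ⟨u, hu, rfl⟩
    refine ⟨c • u, ?_, map_smul _ _ _⟩
    have := Submodule.smul_mem (LbR m b) (Polynomial.C c) hu
    rwa [polyC_smul] at this
  have hXS : ∀ v : Rm m, v ∈ S → (Polynomial.X : Polynomial ℂ) • v ∈ S := by
    rintro _ ⟨u, hu, rfl⟩
    rw [polyX_smul, psi_X_smul m b N f1 y E pr hN hsum hrange hy u hu]
    refine ⟨_, ?_, rfl⟩
    refine Submodule.add_mem _ (Submodule.smul_mem _ _ hu) ?_
    exact hVb_Lb _ (hf1' (toD m b u))
  have hPS : ∀ (p : Polynomial ℂ) (v : Rm m), v ∈ S → p • v ∈ S := by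
    intro p
    induction p using Polynomial.induction_on with
    | C a => intro v hv; rw [polyC_smul]; exact hCS a v hv
    | add p q hp hq => intro v hv; rw [add_smul]; exact hadd _ _ (hp v hv) (hq v hv)
    | monomial n a hp =>
      intro v hv
      rw [show (Polynomial.C a * Polynomial.X ^ (n + 1) : Polynomial ℂ)
          = Polynomial.X * (Polynomial.C a * Polynomial.X ^ n) by ring, mul_smul]
      exact hXS _ (hp v hv)
  refine ⟨{ carrier := S
            add_mem' := fun {v w} hv hw => hadd v w hv hw
            zero_mem' := h0S
            smul_mem' := fun p {v} hv => hPS p v hv }, rfl, ?_, ?_, ?_, ?_⟩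
  · -- FG
    rw [Submodule.fg_def]
    refine ⟨(Set.range fun i : Fin m => (Pi.single i (1 : RatFunc ℂ) : Rm m)) ∪
      (Set.range fun p : (i : Fin m) × Fin (b i) => Psi m b N f1 y E pr (eps m b p)),
      (Set.finite_range _).union (Set.finite_range _), ?_⟩
    apply le_antisymm
    · rw [Submodule.span_le]
      rintro v (⟨i, rfl⟩ | ⟨p, rfl⟩)
      · have hmem := single_one_mem_L0 m i
        exact ⟨_, hL0_Lb _ hmem, hid _ hmem⟩
      · exact ⟨eps m b p, eps_mem_LbR_aux m b p, rfl⟩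
    · rintro v ⟨u, hu, rfl⟩
      have hdec : Psi m b N f1 y E pr u
          = (u - iota m b (toD m b u)) + Psi m b N f1 y E pr (iota m b (toD m b u)) := by
        conv_lhs => rw [show u = (u - iota m b (toD m b u)) + iota m b (toD m b u) by abel]
        rw [map_add, hid _ (sub_iota_mem_L0 m b u hu)]
      rw [hdec]
      refine Submodule.add_mem _ ?_ ?_
      · have hw := sub_iota_mem_L0 m b u hu
        choose p hp using hw
        have hrepr : u - iota m b (toD m b u) = ∑ i, p i • (Pi.single i (1 : RatFunc ℂ) : Rm m) := by
          funext j
          rw [Finset.sum_apply, Finset.sum_eq_single j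
            (fun i _ hij => by
              show p i • (Pi.single i (1 : RatFunc ℂ) : Rm m) j = 0
              rw [Pi.single_eq_of_ne (Ne.symm hij), smul_zero])
            (fun h => absurd (Finset.mem_univ j) h)]
          have h6 : (p j • (Pi.single j (1 : RatFunc ℂ) : Rm m)) j = p j • (1 : RatFunc ℂ) := by
            show p j • (Pi.single j (1 : RatFunc ℂ) : Rm m) j = _
            rw [Pi.single_eq_same]
          rw [h6, Algebra.smul_def, mul_one, hp j]
        rw [hrepr]
        exact Submodule.sum_mem _ (fun i _ => Submodule.smul_mem _ _
          (Submodule.subset_span (Or.inl ⟨i, rfl⟩)))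
      · have hio : iota m b (toD m b u) = ∑ q, (toD m b u) q • eps m b q := rfl
        rw [hio, map_sum]
        refine Submodule.sum_mem _ (fun q _ => ?_)
        rw [map_smul, ← polyC_smul]
        exact Submodule.smul_mem _ _ (Submodule.subset_span (Or.inr ⟨q, rfl⟩))
  · -- spans over RatFunc
    rw [eq_top_iff]
    rintro v -
    rw [← single_comb m v]
    refine Submodule.sum_mem _ (fun i _ => Submodule.smul_mem _ _ ?_)
    refine Submodule.subset_span ?_
    have hmem := single_one_mem_L0 m i
    exact ⟨_, hL0_Lb _ hmem, hid _ hmem⟩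
  · -- L0 ≤ M
    intro w hw
    exact ⟨w, hL0_Lb w hw, hid w hw⟩
  · -- the complement W
    refine ⟨LinearMap.range ((Psi m b N f1 y E pr) ∘ₗ iota m b), ?_, ?_, ?_, ?_⟩
    · infer_instance
    · have hinj : Function.Injective ((Psi m b N f1 y E pr) ∘ₗ iota m b) := by
        intro x1 x2 h12
        have h3 : Psi m b N f1 y E pr (iota m b (x1 - x2)) = 0 := by
          rw [map_sub, map_sub, sub_eq_zero]
          exact h12
        have h4 := psi_iota_zero_imp m b N f1 y E pr hb hf1' (x1 - x2) h3
        exact sub_eq_zero.mp h4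
      rw [LinearMap.finrank_range_of_inj hinj, finrank_Dspace m b, hN]
    · rw [eq_bot_iff]
      intro w hw
      obtain ⟨hw1, hw2⟩ := Submodule.mem_inf.mp hw
      obtain ⟨x, rfl⟩ := hw1
      have h5 : Psi m b N f1 y E pr (iota m b x) = 0 :=
        psi_iota_L0_eq_zero m b N f1 y E pr hb hf1' x hw2
      exact (Submodule.mem_bot ℂ).mpr h5
    · apply le_antisymm
      · refine sup_le ?_ ?_
        · intro w hw
          exact ⟨w, hL0_Lb w hw, hid w hw⟩
        · rintro _ ⟨x, rfl⟩
          exact ⟨iota m b x, iota_mem_LbR m b x, rfl⟩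
      · intro v hv
        obtain ⟨u, hu, rfl⟩ := hv
        have hdec : Psi m b N f1 y E pr u
            = (u - iota m b (toD m b u)) + Psi m b N f1 y E pr (iota m b (toD m b u)) := by
          conv_lhs => rw [show u = (u - iota m b (toD m b u)) + iota m b (toD m b u) by abel]
          rw [map_add, hid _ (sub_iota_mem_L0 m b u hu)]
        rw [hdec]
        exact Submodule.add_mem _
          (Submodule.mem_sup_left (sub_iota_mem_L0 m b u hu))
          (Submodule.mem_sup_right ⟨toD m b u, rfl⟩)

end

end GrassRat
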